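/- arXiv:2110.06819 — 2 statements merged into one kernel-verified Lean document; each statement's English description precedes it below -/
import Mathlib

section
/- For G_ε(y) = −μx_c²ε + (1−2μx_cε)y − μ(x_c+ε)y² − μy³ with μ>0, x_c>0 and ε>0 small, the fixed points near 0 are non-real complex conjugates y±(ε) = ±i·x_c^{1/2}ε^{1/2} + O(ε), with multipliers λ(y±(ε)) = 1 ∓ 2i·μx_c^{3/2}ε^{1/2} + O(ε); in particular |λ(y±(ε))| > 1, so both fixed points are repelling. -/
lemma deriv_cubic (a b c d z : ℂ) :
    deriv (fun y : ℂ => a + b*y - c*y^2 - d*y^3) z = b - 2*c*z - 3*d*z^2 := by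
  have h1 : HasDerivAt (fun y : ℂ => y) 1 z := hasDerivAt_id z
  have h2 : HasDerivAt (fun y : ℂ => y^2) (2*z) z := by simpa using hasDerivAt_pow 2 z
  have h3 : HasDerivAt (fun y : ℂ => y^3) (3*z^2) z := by simpa using hasDerivAt_pow 3 z
  have h := (((hasDerivAt_const z a).add (h1.const_mul b)).sub (h2.const_mul c)).sub
    (h3.const_mul d)
  have h' : HasDerivAt (fun y : ℂ => a + b*y - c*y^2 - d*y^3) (b - 2*c*z - 3*d*z^2) z := by
    exact h.congr_deriv (by ring)
  exact h'.deriv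

lemma one_lt_norm_mk (a b : ℝ) (h : 1 < a) : 1 < ‖((a:ℂ) + (b:ℂ)*Complex.I : ℂ)‖ := by
  have hre : ((a:ℂ) + (b:ℂ)*Complex.I).re = a := by simp
  calc (1:ℝ) < a := h
  _ = ((a:ℂ) + (b:ℂ)*Complex.I).re := hre.symm
  _ ≤ _ := Complex.re_le_norm _

lemma norm_mk_le (a b : ℝ) : ‖((a:ℂ) + (b:ℂ)*Complex.I : ℂ)‖ ≤ |a| + |b| := by
  refine (Complex.norm_le_abs_re_add_abs_im _).trans ?_
  simp

set_option maxHeartbeats 2000000 in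
/-- For `G_ε` with `μ>0`, `x_c>0` and `ε>0` small, the fixed points near `0` are
non-real complex conjugates `y±(ε) = ±i x_c^{1/2} ε^{1/2} + O(ε)`, with multipliers
`λ(y±(ε)) = 1 ∓ 2i μ x_c^{3/2} ε^{1/2} + O(ε)`; in particular `|λ(y±(ε))| > 1`,
so both fixed points are repelling. -/
theorem stmt5 (μ xc : ℝ) (hμ : 0 < μ) (hxc : 0 < xc) :
    ∃ C > 0, ∃ δ > 0, ∀ ε : ℝ, 0 < ε → ε < δ →
      ∃ ym yp : ℂ,
        (fun y : ℂ => -(μ : ℂ) * (xc : ℂ) ^ 2 * (ε : ℂ)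
            + (1 - 2 * (μ : ℂ) * (xc : ℂ) * (ε : ℂ)) * y
            - (μ : ℂ) * ((xc : ℂ) + (ε : ℂ)) * y ^ 2 - (μ : ℂ) * y ^ 3) ym = ym ∧
        (fun y : ℂ => -(μ : ℂ) * (xc : ℂ) ^ 2 * (ε : ℂ)
            + (1 - 2 * (μ : ℂ) * (xc : ℂ) * (ε : ℂ)) * y
            - (μ : ℂ) * ((xc : ℂ) + (ε : ℂ)) * y ^ 2 - (μ : ℂ) * y ^ 3) yp = yp ∧
        yp.im ≠ 0 ∧ ym = (starRingEnd ℂ) yp ∧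
        ‖yp - Complex.I * ((Real.sqrt xc * Real.sqrt ε : ℝ) : ℂ)‖ ≤ C * ε ∧
        ‖ym + Complex.I * ((Real.sqrt xc * Real.sqrt ε : ℝ) : ℂ)‖ ≤ C * ε ∧
        ‖deriv (fun y : ℂ => -(μ : ℂ) * (xc : ℂ) ^ 2 * (ε : ℂ)
            + (1 - 2 * (μ : ℂ) * (xc : ℂ) * (ε : ℂ)) * y
            - (μ : ℂ) * ((xc : ℂ) + (ε : ℂ)) * y ^ 2 - (μ : ℂ) * y ^ 3) yp
          - (1 - 2 * Complex.I * ((μ * xc ^ ((3 : ℝ) / 2) * Real.sqrt ε : ℝ) : ℂ))‖ ≤ C * ε ∧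
        ‖deriv (fun y : ℂ => -(μ : ℂ) * (xc : ℂ) ^ 2 * (ε : ℂ)
            + (1 - 2 * (μ : ℂ) * (xc : ℂ) * (ε : ℂ)) * y
            - (μ : ℂ) * ((xc : ℂ) + (ε : ℂ)) * y ^ 2 - (μ : ℂ) * y ^ 3) ym
          - (1 + 2 * Complex.I * ((μ * xc ^ ((3 : ℝ) / 2) * Real.sqrt ε : ℝ) : ℂ))‖ ≤ C * ε ∧
        1 < ‖deriv (fun y : ℂ => -(μ : ℂ) * (xc : ℂ) ^ 2 * (ε : ℂ)
            + (1 - 2 * (μ : ℂ) * (xc : ℂ) * (ε : ℂ)) * y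
            - (μ : ℂ) * ((xc : ℂ) + (ε : ℂ)) * y ^ 2 - (μ : ℂ) * y ^ 3) yp‖ ∧
        1 < ‖deriv (fun y : ℂ => -(μ : ℂ) * (xc : ℂ) ^ 2 * (ε : ℂ)
            + (1 - 2 * (μ : ℂ) * (xc : ℂ) * (ε : ℂ)) * y
            - (μ : ℂ) * ((xc : ℂ) + (ε : ℂ)) * y ^ 2 - (μ : ℂ) * y ^ 3) ym‖ := by
  refine ⟨5*μ*xc + 5*μ + 5, by positivity, xc, hxc, fun ε hε hεδ => ?_⟩
  set C : ℝ := 5*μ*xc + 5*μ + 5 with hC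
  have hC1 : 1 ≤ C := by nlinarith
  -- setup
  have hq : 0 < xc*ε - ε^2/4 := by nlinarith
  set s : ℝ := Real.sqrt (xc*ε - ε^2/4) with hsdef
  set t : ℝ := Real.sqrt xc * Real.sqrt ε with htdef
  have hs2 : s^2 = xc*ε - ε^2/4 := Real.sq_sqrt hq.le
  have hspos : 0 < s := Real.sqrt_pos.mpr hq
  have ht2 : t^2 = xc*ε := by
    rw [htdef, mul_pow, Real.sq_sqrt hxc.le, Real.sq_sqrt hε.le]
  have htpos : 0 < t := by positivity
  have hst : s ≤ t := by nlinarith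
  have hεt : ε ≤ t := by nlinarith
  have htxc : t ≤ xc := by nlinarith
  have hts4 : t - s ≤ ε/4 := by nlinarith
  -- the two fixed points
  set yp : ℂ := (↑(-(ε/2)) + ↑s * Complex.I) with hypdef
  set ym : ℂ := (↑(-(ε/2)) + ↑(-s) * Complex.I) with hymdef
  clear_value C s t yp ym
  have hxc32 : xc ^ ((3:ℝ)/2) = xc * Real.sqrt xc := by
    rw [show ((3:ℝ)/2) = 1 + 1/2 by norm_num, Real.rpow_add hxc, Real.rpow_one,
      ← Real.sqrt_eq_rpow]
  -- fixed point equations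
  have keyp : yp^2 + (ε:ℂ)*yp + (xc:ℂ)*(ε:ℂ) = 0 := by
    rw [hypdef]
    simp only [Complex.ext_iff, Complex.add_re, Complex.add_im, Complex.mul_re,
      Complex.mul_im, Complex.ofReal_re, Complex.ofReal_im, Complex.I_re, Complex.I_im,
      Complex.zero_re, Complex.zero_im, pow_two]
    constructor <;> nlinarith [hs2]
  have keym : ym^2 + (ε:ℂ)*ym + (xc:ℂ)*(ε:ℂ) = 0 := by
    rw [hymdef]
    simp only [Complex.ext_iff, Complex.add_re, Complex.add_im, Complex.mul_re,
      Complex.mul_im, Complex.ofReal_re, Complex.ofReal_im, Complex.I_re, Complex.I_im,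
      Complex.zero_re, Complex.zero_im, pow_two]
    constructor <;> nlinarith [hs2]
  have fixp : -(μ : ℂ) * (xc : ℂ) ^ 2 * (ε : ℂ)
      + (1 - 2 * (μ : ℂ) * (xc : ℂ) * (ε : ℂ)) * yp
      - (μ : ℂ) * ((xc : ℂ) + (ε : ℂ)) * yp ^ 2 - (μ : ℂ) * yp ^ 3 = yp := by
    linear_combination (-(μ:ℂ) * (yp + xc)) * keyp
  have fixm : -(μ : ℂ) * (xc : ℂ) ^ 2 * (ε : ℂ)
      + (1 - 2 * (μ : ℂ) * (xc : ℂ) * (ε : ℂ)) * ym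
      - (μ : ℂ) * ((xc : ℂ) + (ε : ℂ)) * ym ^ 2 - (μ : ℂ) * ym ^ 3 = ym := by
    linear_combination (-(μ:ℂ) * (ym + xc)) * keym
  -- derivatives
  have hderp : deriv (fun y : ℂ => -(μ : ℂ) * (xc : ℂ) ^ 2 * (ε : ℂ)
      + (1 - 2 * (μ : ℂ) * (xc : ℂ) * (ε : ℂ)) * y
      - (μ : ℂ) * ((xc : ℂ) + (ε : ℂ)) * y ^ 2 - (μ : ℂ) * y ^ 3) yp
      = (1 - 2 * (μ : ℂ) * (xc : ℂ) * (ε : ℂ)) - 2*((μ:ℂ)*((xc:ℂ)+(ε:ℂ)))*yp - 3*(μ:ℂ)*yp^2 :=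
    deriv_cubic _ _ _ _ _
  have hderm : deriv (fun y : ℂ => -(μ : ℂ) * (xc : ℂ) ^ 2 * (ε : ℂ)
      + (1 - 2 * (μ : ℂ) * (xc : ℂ) * (ε : ℂ)) * y
      - (μ : ℂ) * ((xc : ℂ) + (ε : ℂ)) * y ^ 2 - (μ : ℂ) * y ^ 3) ym
      = (1 - 2 * (μ : ℂ) * (xc : ℂ) * (ε : ℂ)) - 2*((μ:ℂ)*((xc:ℂ)+(ε:ℂ)))*ym - 3*(μ:ℂ)*ym^2 :=
    deriv_cubic _ _ _ _ _
  have hvalp : (1 - 2 * (μ : ℂ) * (xc : ℂ) * (ε : ℂ)) - 2*((μ:ℂ)*((xc:ℂ)+(ε:ℂ)))*yp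
      - 3*(μ:ℂ)*yp^2 = ((1 + 2*μ*xc*ε - μ*ε^2/2 : ℝ) : ℂ) + ((μ*s*(ε - 2*xc) : ℝ) : ℂ) * Complex.I := by
    rw [hypdef]
    simp only [Complex.ext_iff, Complex.add_re, Complex.add_im, Complex.mul_re,
      Complex.mul_im, Complex.ofReal_re, Complex.ofReal_im, Complex.I_re, Complex.I_im,
      Complex.sub_re, Complex.sub_im, Complex.one_re, Complex.one_im, pow_two,
      Complex.re_ofNat, Complex.im_ofNat]
    constructor <;> nlinarith [hs2]
  have hvalm : (1 - 2 * (μ : ℂ) * (xc : ℂ) * (ε : ℂ)) - 2*((μ:ℂ)*((xc:ℂ)+(ε:ℂ)))*ym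
      - 3*(μ:ℂ)*ym^2 = ((1 + 2*μ*xc*ε - μ*ε^2/2 : ℝ) : ℂ) + ((-(μ*s*(ε - 2*xc)) : ℝ) : ℂ) * Complex.I := by
    rw [hymdef]
    simp only [Complex.ext_iff, Complex.add_re, Complex.add_im, Complex.mul_re,
      Complex.mul_im, Complex.ofReal_re, Complex.ofReal_im, Complex.I_re, Complex.I_im,
      Complex.sub_re, Complex.sub_im, Complex.one_re, Complex.one_im, pow_two,
      Complex.re_ofNat, Complex.im_ofNat]
    constructor <;> nlinarith [hs2]
  have hgt : 1 < 1 + 2*μ*xc*ε - μ*ε^2/2 := by nlinarith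
  refine ⟨ym, yp, fixm, fixp, ?_, ?_, ?_, ?_, ?_, ?_, ?_, ?_⟩
  · -- yp.im ≠ 0
    rw [hypdef]
    simp only [Complex.add_im, Complex.mul_im, Complex.ofReal_re, Complex.ofReal_im,
      Complex.I_re, Complex.I_im]
    simpa using hspos.ne'
  · -- ym = conj yp
    rw [hypdef, hymdef]
    simp only [map_add, map_mul, Complex.conj_ofReal, Complex.conj_I]
    push_cast
    ring
  · -- ‖yp - I t‖ ≤ C ε
    have h1 : yp - Complex.I * ((t:ℝ):ℂ) = ↑(-(ε/2)) + ((s - t : ℝ) : ℂ) * Complex.I := by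
      rw [hypdef]; push_cast; ring
    rw [h1]
    refine (norm_mk_le _ _).trans ?_
    rw [abs_of_nonpos (by linarith), abs_of_nonpos (by linarith)]
    nlinarith
  · -- ‖ym + I t‖ ≤ C ε
    have h1 : ym + Complex.I * ((t:ℝ):ℂ) = ↑(-(ε/2)) + ((t - s : ℝ) : ℂ) * Complex.I := by
      rw [hymdef]; push_cast; ring
    rw [h1]
    refine (norm_mk_le _ _).trans ?_
    rw [abs_of_nonpos (by linarith), abs_of_nonneg (by linarith)]
    nlinarith
  · -- multiplier estimate at yp
    rw [hderp, hvalp]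
    have h1 : (((1 + 2*μ*xc*ε - μ*ε^2/2 : ℝ) : ℂ) + ((μ*s*(ε - 2*xc) : ℝ) : ℂ) * Complex.I : ℂ)
        - (1 - 2 * Complex.I * ((μ * xc ^ ((3 : ℝ) / 2) * Real.sqrt ε : ℝ) : ℂ))
        = ((2*μ*xc*ε - μ*ε^2/2 : ℝ) : ℂ) + ((μ*s*ε + 2*μ*xc*(t - s) : ℝ) : ℂ) * Complex.I := by
      rw [hxc32]; push_cast; rw [htdef]; push_cast; ring
    rw [h1]
    refine (norm_mk_le _ _).trans ?_
    rw [abs_of_nonneg (by nlinarith), abs_of_nonneg (by nlinarith [mul_nonneg (mul_nonneg hμ.le hspos.le) hε.le, mul_nonneg (mul_nonneg (by linarith : (0:ℝ) ≤ 2*μ) hxc.le) (by linarith : (0:ℝ) ≤ t - s)])]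
    nlinarith [mul_le_mul_of_nonneg_left hst (by positivity : (0:ℝ) ≤ μ*ε),
      mul_le_mul_of_nonneg_left hts4 (by positivity : (0:ℝ) ≤ 2*μ*xc),
      mul_le_mul_of_nonneg_left htxc (by positivity : (0:ℝ) ≤ μ*ε)]
  · -- multiplier estimate at ym
    rw [hderm, hvalm]
    have h1 : (((1 + 2*μ*xc*ε - μ*ε^2/2 : ℝ) : ℂ) + ((-(μ*s*(ε - 2*xc)) : ℝ) : ℂ) * Complex.I : ℂ)
        - (1 + 2 * Complex.I * ((μ * xc ^ ((3 : ℝ) / 2) * Real.sqrt ε : ℝ) : ℂ))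
        = ((2*μ*xc*ε - μ*ε^2/2 : ℝ) : ℂ) + ((-(μ*s*ε + 2*μ*xc*(t - s)) : ℝ) : ℂ) * Complex.I := by
      rw [hxc32]; push_cast; rw [htdef]; push_cast; ring
    rw [h1]
    refine (norm_mk_le _ _).trans ?_
    rw [abs_of_nonneg (by nlinarith), abs_of_nonpos (by nlinarith [mul_nonneg (mul_nonneg hμ.le hspos.le) hε.le, mul_nonneg (mul_nonneg (by linarith : (0:ℝ) ≤ 2*μ) hxc.le) (by linarith : (0:ℝ) ≤ t - s)])]
    nlinarith [mul_le_mul_of_nonneg_left hst (by positivity : (0:ℝ) ≤ μ*ε),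
      mul_le_mul_of_nonneg_left hts4 (by positivity : (0:ℝ) ≤ 2*μ*xc),
      mul_le_mul_of_nonneg_left htxc (by positivity : (0:ℝ) ≤ μ*ε)]
  · -- repelling at yp
    rw [hderp, hvalp]
    exact one_lt_norm_mk _ _ hgt
  · -- repelling at ym
    rw [hderm, hvalm]
    exact one_lt_norm_mk _ _ hgt
end

section
/- For ε > 0 small, the number N_ε ≈ ∫_{x_c−δ}^{x_c+δ} dx/(x − F_ε(x)) of iterates needed to traverse the interval [x_c−δ, x_c+δ] under F_ε satisfies N_ε = π/(μ x_c^{3/2} ε^{1/2}) + O(1) as ε → 0⁺; in particular N_ε · ε^{1/2} → π/(μ x_c^{3/2}). -/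
open Asymptotics Filter Topology

open Real intervalIntegral


lemma closed_form (μ xc δ ε : ℝ) (hμ : 0 < μ) (hxc : 0 < xc) (hδ : 0 < δ)
    (hδ2 : δ < xc / 2) (hε : 0 < ε) (hεδ : ε < δ) :
    (∫ x in (xc - δ)..(xc + δ),
        (x - ((1 - μ * xc ^ 2) * x + μ * (2 * xc - ε) * x ^ 2 - μ * x ^ 3))⁻¹)
      = (1 / (μ * xc ^ 2)) *
        ((Real.log (xc + δ) - Real.log (xc - δ))
          - Real.log ((xc + δ) ^ 2 - (2 * xc - ε) * (xc + δ) + xc ^ 2) / 2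
          + Real.log ((xc - δ) ^ 2 - (2 * xc - ε) * (xc - δ) + xc ^ 2) / 2
          + ((xc - ε / 2) / (Real.sqrt ε * Real.sqrt (xc - ε / 4))) *
            (Real.arctan ((δ + ε / 2) / (Real.sqrt ε * Real.sqrt (xc - ε / 4)))
              + Real.arctan ((δ - ε / 2) / (Real.sqrt ε * Real.sqrt (xc - ε / 4))))) := by
  set W : ℝ := Real.sqrt ε * Real.sqrt (xc - ε / 4) with hW
  have hεxc : ε < xc := by linarith
  have hW2 : W ^ 2 = ε * (xc - ε / 4) := by
    rw [hW, mul_pow, Real.sq_sqrt hε.le, Real.sq_sqrt (by nlinarith : (0:ℝ) ≤ xc - ε/4)]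
  have hWpos : 0 < W :=
    mul_pos (Real.sqrt_pos.2 hε) (Real.sqrt_pos.2 (by nlinarith))
  clear_value W
  set xm : ℝ := xc - ε / 2 with hxm
  clear_value xm
  have hkey : xm ^ 2 + W ^ 2 = xc ^ 2 := by rw [hW2, hxm]; ring
  set Φ : ℝ → ℝ := fun x => (1 / (μ * xc ^ 2)) *
    (Real.log x - Real.log (x ^ 2 - (2 * xc - ε) * x + xc ^ 2) / 2
      + (xm / W) * Real.arctan ((x - xm) / W)) with hΦ
  have hpq : ∀ x : ℝ, x ^ 2 - (2 * xc - ε) * x + xc ^ 2 = (x - xm) ^ 2 + W ^ 2 := by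
    intro x; rw [hW2, hxm]; ring
  have hppos : ∀ x : ℝ, 0 < x ^ 2 - (2 * xc - ε) * x + xc ^ 2 := by
    intro x; rw [hpq]; positivity
  have hmem : ∀ x ∈ Set.uIcc (xc - δ) (xc + δ), 0 < x := by
    intro x hx
    rw [Set.uIcc_of_le (by linarith)] at hx
    linarith [hx.1]
  have hderiv : ∀ x ∈ Set.uIcc (xc - δ) (xc + δ),
      HasDerivAt Φ ((x - ((1 - μ * xc ^ 2) * x + μ * (2 * xc - ε) * x ^ 2 - μ * x ^ 3))⁻¹) x := by
    intro x hx
    have hx0 : 0 < x := hmem x hx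
    have hp : 0 < x ^ 2 - (2 * xc - ε) * x + xc ^ 2 := hppos x
    have h1 : HasDerivAt (fun x : ℝ => Real.log x) x⁻¹ x := Real.hasDerivAt_log hx0.ne'
    have h2 : HasDerivAt (fun x : ℝ => x ^ 2 - (2 * xc - ε) * x + xc ^ 2)
        (2 * x - (2 * xc - ε)) x := by
      have := ((hasDerivAt_pow 2 x).sub (((hasDerivAt_id x).const_mul (2 * xc - ε)))).add_const (xc ^ 2)
      exact this.congr_deriv (by norm_num)
    have h3 : HasDerivAt (fun x : ℝ => Real.log (x ^ 2 - (2 * xc - ε) * x + xc ^ 2))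
        ((x ^ 2 - (2 * xc - ε) * x + xc ^ 2)⁻¹ * (2 * x - (2 * xc - ε))) x :=
      (Real.hasDerivAt_log hp.ne').comp (h₂ := Real.log) x h2
    have h4 : HasDerivAt (fun x : ℝ => (x - xm) / W) (1 / W) x := by
      simpa using ((hasDerivAt_id x).sub_const xm).div_const W
    have h5 : HasDerivAt (fun x : ℝ => Real.arctan ((x - xm) / W))
        (1 / (1 + ((x - xm) / W) ^ 2) * (1 / W)) x :=
      (Real.hasDerivAt_arctan _).comp x h4
    have h6 : HasDerivAt Φ ((1 / (μ * xc ^ 2)) *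
        (x⁻¹ - (x ^ 2 - (2 * xc - ε) * x + xc ^ 2)⁻¹ * (2 * x - (2 * xc - ε)) / 2
          + (xm / W) * (1 / (1 + ((x - xm) / W) ^ 2) * (1 / W)))) x := by
      exact ((h1.sub (h3.div_const 2)).add ((h5.const_mul (xm / W)))).const_mul _
    convert h6 using 1
    have hxFx : x - ((1 - μ * xc ^ 2) * x + μ * (2 * xc - ε) * x ^ 2 - μ * x ^ 3)
        = μ * x * (x ^ 2 - (2 * xc - ε) * x + xc ^ 2) := by ring
    rw [hxFx]
    have h7 : 1 + ((x - xm) / W) ^ 2 = (x ^ 2 - (2 * xc - ε) * x + xc ^ 2) / W ^ 2 := by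
      rw [hpq]; field_simp; ring
    rw [h7]
    have hs : 2 * xc - ε = 2 * xm := by rw [hxm]; ring
    rw [hpq] at hp ⊢
    rw [hs, ← hkey]
    field_simp
    ring
  have hcont : IntervalIntegrable
      (fun x => (x - ((1 - μ * xc ^ 2) * x + μ * (2 * xc - ε) * x ^ 2 - μ * x ^ 3))⁻¹)
      MeasureTheory.volume (xc - δ) (xc + δ) := by
    apply ContinuousOn.intervalIntegrable
    apply ContinuousOn.inv₀
    · fun_prop
    · intro x hx
      have hx0 : 0 < x := hmem x hx
      have h8 : x - ((1 - μ * xc ^ 2) * x + μ * (2 * xc - ε) * x ^ 2 - μ * x ^ 3)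
          = μ * x * (x ^ 2 - (2 * xc - ε) * x + xc ^ 2) := by ring
      rw [h8]
      exact (mul_pos (mul_pos hμ hx0) (hppos x)).ne'
  rw [intervalIntegral.integral_eq_sub_of_hasDerivAt hderiv hcont]
  rw [hΦ]
  have e1 : xc + δ - xm = δ + ε / 2 := by rw [hxm]; ring
  have e2 : xc - δ - xm = -(δ - ε / 2) := by rw [hxm]; ring
  simp only [e1, e2, neg_div, Real.arctan_neg]
  rw [hxm]
  ring


lemma stmt19_ptid (xc δ ε : ℝ) (hxc : 0 < xc) (hδ : 0 < δ)
    (hδ2 : δ < xc / 2) (hε : 0 < ε) (hεδ : ε < δ) :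
    (((xc - ε/2) / (Real.sqrt ε * Real.sqrt (xc - ε/4))) *
        (Real.arctan ((δ + ε/2)/(Real.sqrt ε * Real.sqrt (xc - ε/4)))
          + Real.arctan ((δ - ε/2)/(Real.sqrt ε * Real.sqrt (xc - ε/4))))
        - Real.pi * Real.sqrt xc / Real.sqrt ε)
      = Real.pi * Real.sqrt ε * (ε - 3*xc) /
          (4 * Real.sqrt (xc - ε/4) * ((xc - ε/2) + Real.sqrt xc * Real.sqrt (xc - ε/4)))
        - (xc - ε/2) * (Real.arctan (Real.sqrt ε * Real.sqrt (xc - ε/4)/(δ + ε/2))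
              / (Real.sqrt ε * Real.sqrt (xc - ε/4)/(δ + ε/2))) / (δ + ε/2)
        - (xc - ε/2) * (Real.arctan (Real.sqrt ε * Real.sqrt (xc - ε/4)/(δ - ε/2))
              / (Real.sqrt ε * Real.sqrt (xc - ε/4)/(δ - ε/2))) / (δ - ε/2) := by
  set s := Real.sqrt ε with hsd
  set w := Real.sqrt (xc - ε/4) with hwd
  set r := Real.sqrt xc with hrd
  set xm := xc - ε/2 with hxmd
  have hs : 0 < s := Real.sqrt_pos.2 hε
  have hw : 0 < w := Real.sqrt_pos.2 (by nlinarith)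
  have hr : 0 < r := Real.sqrt_pos.2 hxc
  have hs2 : s ^ 2 = ε := Real.sq_sqrt hε.le
  have hw2 : w ^ 2 = xc - ε/4 := Real.sq_sqrt (by nlinarith)
  have hr2 : r ^ 2 = xc := Real.sq_sqrt hxc.le
  have hxm : 0 < xm := by show (0:ℝ) < xc - ε/2; nlinarith
  have hdp : 0 < δ + ε/2 := by linarith
  have hdm : 0 < δ - ε/2 := by linarith
  have htp : 0 < s*w/(δ + ε/2) := by positivity
  have htm : 0 < s*w/(δ - ε/2) := by positivity
  have ha : Real.arctan ((δ + ε/2)/(s*w)) = Real.pi/2 - Real.arctan (s*w/(δ + ε/2)) := by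
    rw [show (δ + ε/2)/(s*w) = (s*w/(δ + ε/2))⁻¹ by rw [inv_div], Real.arctan_inv_of_pos htp]
  have hb : Real.arctan ((δ - ε/2)/(s*w)) = Real.pi/2 - Real.arctan (s*w/(δ - ε/2)) := by
    rw [show (δ - ε/2)/(s*w) = (s*w/(δ - ε/2))⁻¹ by rw [inv_div], Real.arctan_inv_of_pos htm]
  rw [ha, hb]
  have hplus : 0 < xm + r * w := by positivity
  have hd : (xm - r*w)*(xm + r*w) = ε*(ε - 3*xc)/4 := by
    have : xm^2 - r^2*w^2 = ε*(ε-3*xc)/4 := by rw [hr2, hw2]; show (xc-ε/2)^2 - _ = _; ring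
    linear_combination this
  have hc : xm/(s*w)*Real.pi - Real.pi*r/s = Real.pi*s*(ε-3*xc)/(4*w*(xm+r*w)) := by
    have e1 : xm/(s*w) - r/s = (xm - r*w)/(s*w) := by field_simp
    have e2 : xm - r*w = ε*(ε-3*xc)/4/(xm+r*w) := by
      rw [eq_div_iff hplus.ne']; exact hd
    have e3 : xm/(s*w)*Real.pi - Real.pi*r/s = Real.pi * ((xm/(s*w) - r/s)) := by ring
    rw [e3, e1, e2, div_div]
    have hεs : ε / s = s := Real.div_sqrt
    rw [show ε*(ε-3*xc)/4/((xm+r*w)*(s*w)) = (ε/s)*((ε-3*xc)/(4*w*(xm+r*w))) by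
      rw [div_div, div_mul_div_comm, div_eq_div_iff (by positivity) (by positivity)]; ring, hεs]
    ring
  have hbA : ∀ A : ℝ, A / (s*w/(δ + ε/2)) / (δ + ε/2) = A / (s*w) := by
    intro A; rw [div_div, div_mul_cancel₀ _ (ne_of_gt hdp)]
  have hbB : ∀ A : ℝ, A / (s*w/(δ - ε/2)) / (δ - ε/2) = A / (s*w) := by
    intro A; rw [div_div, div_mul_cancel₀ _ (ne_of_gt hdm)]
  have r1 : xm * (Real.arctan (s*w/(δ + ε/2)) / (s*w/(δ + ε/2))) / (δ + ε/2)
      = xm / (s*w) * Real.arctan (s*w/(δ + ε/2)) := by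
    rw [show xm * (Real.arctan (s*w/(δ + ε/2)) / (s*w/(δ + ε/2))) / (δ + ε/2)
        = xm * (Real.arctan (s*w/(δ + ε/2)) / (s*w/(δ + ε/2)) / (δ + ε/2)) by ring,
      hbA]
    ring
  have r2 : xm * (Real.arctan (s*w/(δ - ε/2)) / (s*w/(δ - ε/2))) / (δ - ε/2)
      = xm / (s*w) * Real.arctan (s*w/(δ - ε/2)) := by
    rw [show xm * (Real.arctan (s*w/(δ - ε/2)) / (s*w/(δ - ε/2))) / (δ - ε/2)
        = xm * (Real.arctan (s*w/(δ - ε/2)) / (s*w/(δ - ε/2)) / (δ - ε/2)) by ring,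
      hbB]
    ring
  rw [r1, r2]
  linear_combination hc


lemma stmt19_arctan_div : Tendsto (fun t : ℝ => Real.arctan t / t) (𝓝[≠] (0:ℝ)) (𝓝 1) := by
  have h := (Real.hasDerivAt_arctan 0)
  rw [hasDerivAt_iff_tendsto_slope] at h
  have he : (fun t : ℝ => Real.arctan t / t) = slope Real.arctan 0 := by
    funext t; simp [slope_def_field]
  rw [he]
  simpa using h

lemma stmt19_t_tendsto (xc δ c : ℝ) (hxc : 0 < xc) (hδ : 0 < δ) (hδ2 : δ < xc / 2)
    (hc : c = 1 ∨ c = -1) :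
    Tendsto (fun ε : ℝ => Real.sqrt ε * Real.sqrt (xc - ε/4) / (δ + c * ε/2))
      (𝓝[>] (0:ℝ)) (𝓝[≠] (0:ℝ)) := by
  rw [tendsto_nhdsWithin_iff]
  constructor
  · have : Tendsto (fun ε : ℝ => Real.sqrt ε * Real.sqrt (xc - ε/4) / (δ + c * ε/2)) (𝓝 0)
        (𝓝 (Real.sqrt 0 * Real.sqrt (xc - 0/4) / (δ + c * 0/2))) := by
      apply Tendsto.div
      · exact (Real.continuous_sqrt.tendsto 0).mul
          ((Real.continuous_sqrt.comp (by continuity)).tendsto 0)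
      · exact (continuous_const.add ((continuous_const.mul continuous_id).div_const 2)).tendsto 0
      · simp; positivity
    simpa using this.mono_left nhdsWithin_le_nhds
  · filter_upwards [Ioo_mem_nhdsGT (show (0:ℝ) < δ from hδ)] with ε hε
    have h1 : 0 < Real.sqrt ε := Real.sqrt_pos.2 hε.1
    have h2 : 0 < Real.sqrt (xc - ε/4) := Real.sqrt_pos.2 (by rcases hε with ⟨a,b⟩; nlinarith)
    have h3 : 0 < δ + c * ε/2 := by rcases hc with rfl | rfl <;> rcases hε with ⟨a,b⟩ <;> nlinarith
    exact ne_of_gt (by positivity)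

set_option maxHeartbeats 2000000 in
lemma stmt19_main (μ xc δ : ℝ) (hμ : 0 < μ) (hxc : 0 < xc) (hδ : 0 < δ) (hδ2 : δ < xc / 2) :
    ∃ c : ℝ, Tendsto (fun ε : ℝ =>
        (∫ x in (xc - δ)..(xc + δ),
            (x - ((1 - μ * xc ^ 2) * x + μ * (2 * xc - ε) * x ^ 2 - μ * x ^ 3))⁻¹)
          - Real.pi / (μ * xc ^ ((3 : ℝ) / 2) * Real.sqrt ε)) (𝓝[>] (0:ℝ)) (𝓝 c) := by
  have hxcd : (0:ℝ) < xc - δ := by linarith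
  -- limits of the log terms
  have hL2 : Tendsto (fun ε : ℝ => Real.log ((xc+δ)^2 - (2*xc-ε)*(xc+δ) + xc^2))
      (𝓝[>] (0:ℝ)) (𝓝 (Real.log (δ^2))) := by
    have cont : Tendsto (fun ε : ℝ => (xc+δ)^2 - (2*xc-ε)*(xc+δ) + xc^2) (𝓝 0) (𝓝 (δ^2)) := by
      have h0 : (xc+δ)^2 - (2*xc-(0:ℝ))*(xc+δ) + xc^2 = δ^2 := by ring
      have hco : Continuous (fun ε : ℝ => (xc+δ)^2 - (2*xc-ε)*(xc+δ) + xc^2) := by continuity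
      exact hco.tendsto' 0 _ h0
    exact (((Real.continuousAt_log (by positivity : (δ:ℝ)^2 ≠ 0)).tendsto.comp
      cont)).mono_left nhdsWithin_le_nhds
  have hL3 : Tendsto (fun ε : ℝ => Real.log ((xc-δ)^2 - (2*xc-ε)*(xc-δ) + xc^2))
      (𝓝[>] (0:ℝ)) (𝓝 (Real.log (δ^2))) := by
    have cont : Tendsto (fun ε : ℝ => (xc-δ)^2 - (2*xc-ε)*(xc-δ) + xc^2) (𝓝 0) (𝓝 (δ^2)) := by
      have h0 : (xc-δ)^2 - (2*xc-(0:ℝ))*(xc-δ) + xc^2 = δ^2 := by ring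
      have hco : Continuous (fun ε : ℝ => (xc-δ)^2 - (2*xc-ε)*(xc-δ) + xc^2) := by continuity
      exact hco.tendsto' 0 _ h0
    exact (((Real.continuousAt_log (by positivity : (δ:ℝ)^2 ≠ 0)).tendsto.comp
      cont)).mono_left nhdsWithin_le_nhds
  -- limit of T1
  have hT1 : Tendsto (fun ε : ℝ => Real.pi * Real.sqrt ε * (ε - 3*xc) /
      (4 * Real.sqrt (xc - ε/4) * ((xc - ε/2) + Real.sqrt xc * Real.sqrt (xc - ε/4))))
      (𝓝[>] (0:ℝ)) (𝓝 0) := by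
    have cont : Tendsto (fun ε : ℝ => Real.pi * Real.sqrt ε * (ε - 3*xc) /
        (4 * Real.sqrt (xc - ε/4) * ((xc - ε/2) + Real.sqrt xc * Real.sqrt (xc - ε/4)))) (𝓝 0)
        (𝓝 (Real.pi * Real.sqrt 0 * (0 - 3*xc) /
          (4 * Real.sqrt (xc - 0/4) * ((xc - 0/2) + Real.sqrt xc * Real.sqrt (xc - 0/4))))) := by
      apply Tendsto.div
      · exact ((continuous_const.mul Real.continuous_sqrt).mul (by continuity)).tendsto 0
      · exact ((continuous_const.mul (Real.continuous_sqrt.comp (by continuity))).mul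
          ((by continuity : Continuous fun ε : ℝ => xc - ε/2).add
            (continuous_const.mul (Real.continuous_sqrt.comp (by continuity))))).tendsto 0
      · have h1 : (0:ℝ) < Real.sqrt xc := Real.sqrt_pos.2 hxc
        have h2 : (0:ℝ) < Real.sqrt (xc - 0/4) := Real.sqrt_pos.2 (by linarith)
        have h3 : (0:ℝ) < xc - 0/2 := by linarith
        exact ne_of_gt (mul_pos (mul_pos four_pos h2) (add_pos h3 (mul_pos h1 h2)))
    have h0 : Real.pi * Real.sqrt 0 * (0 - 3*xc) /
        (4 * Real.sqrt (xc - 0/4) * ((xc - 0/2) + Real.sqrt xc * Real.sqrt (xc - 0/4))) = 0 := by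
      simp
    rw [h0] at cont
    exact cont.mono_left nhdsWithin_le_nhds
  -- limits of arctan-ratio terms
  have hqp : Tendsto (fun ε : ℝ =>
      Real.arctan (Real.sqrt ε * Real.sqrt (xc - ε/4)/(δ + ε/2))
        / (Real.sqrt ε * Real.sqrt (xc - ε/4)/(δ + ε/2))) (𝓝[>] (0:ℝ)) (𝓝 1) := by
    have ht := stmt19_t_tendsto xc δ 1 hxc hδ hδ2 (Or.inl rfl)
    have he : (fun ε : ℝ => Real.sqrt ε * Real.sqrt (xc - ε/4) / (δ + 1 * ε/2))
        = fun ε : ℝ => Real.sqrt ε * Real.sqrt (xc - ε/4) / (δ + ε/2) := by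
      funext ε; norm_num
    rw [he] at ht
    exact stmt19_arctan_div.comp ht
  have hqm : Tendsto (fun ε : ℝ =>
      Real.arctan (Real.sqrt ε * Real.sqrt (xc - ε/4)/(δ - ε/2))
        / (Real.sqrt ε * Real.sqrt (xc - ε/4)/(δ - ε/2))) (𝓝[>] (0:ℝ)) (𝓝 1) := by
    have ht := stmt19_t_tendsto xc δ (-1) hxc hδ hδ2 (Or.inr rfl)
    have he : (fun ε : ℝ => Real.sqrt ε * Real.sqrt (xc - ε/4) / (δ + (-1) * ε/2))
        = fun ε : ℝ => Real.sqrt ε * Real.sqrt (xc - ε/4) / (δ - ε/2) := by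
      funext ε; congr 1; ring
    rw [he] at ht
    exact stmt19_arctan_div.comp ht
  have hT2 : Tendsto (fun ε : ℝ => (xc - ε/2) *
      (Real.arctan (Real.sqrt ε * Real.sqrt (xc - ε/4)/(δ + ε/2))
        / (Real.sqrt ε * Real.sqrt (xc - ε/4)/(δ + ε/2))) / (δ + ε/2))
      (𝓝[>] (0:ℝ)) (𝓝 (xc * 1 / δ)) := by
    apply Tendsto.div
    · exact (((by continuity : Continuous fun ε : ℝ => xc - ε/2).tendsto' 0 xc
        (by norm_num)).mono_left nhdsWithin_le_nhds).mul hqp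
    · exact ((by continuity : Continuous fun ε : ℝ => δ + ε/2).tendsto' 0 δ
        (by norm_num)).mono_left nhdsWithin_le_nhds
    · exact hδ.ne'
  have hT3 : Tendsto (fun ε : ℝ => (xc - ε/2) *
      (Real.arctan (Real.sqrt ε * Real.sqrt (xc - ε/4)/(δ - ε/2))
        / (Real.sqrt ε * Real.sqrt (xc - ε/4)/(δ - ε/2))) / (δ - ε/2))
      (𝓝[>] (0:ℝ)) (𝓝 (xc * 1 / δ)) := by
    apply Tendsto.div
    · exact (((by continuity : Continuous fun ε : ℝ => xc - ε/2).tendsto' 0 xc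
        (by norm_num)).mono_left nhdsWithin_le_nhds).mul hqm
    · exact ((by continuity : Continuous fun ε : ℝ => δ - ε/2).tendsto' 0 δ
        (by norm_num)).mono_left nhdsWithin_le_nhds
    · exact hδ.ne'
  -- the explicit comparison function N and its limit
  have hN : Tendsto (fun ε : ℝ => (1/(μ*xc^2)) *
      ((Real.log (xc+δ) - Real.log (xc-δ)
          - Real.log ((xc+δ)^2 - (2*xc-ε)*(xc+δ) + xc^2)/2
          + Real.log ((xc-δ)^2 - (2*xc-ε)*(xc-δ) + xc^2)/2)
        + Real.pi * Real.sqrt ε * (ε - 3*xc) /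
            (4 * Real.sqrt (xc - ε/4) * ((xc - ε/2) + Real.sqrt xc * Real.sqrt (xc - ε/4)))
        - (xc - ε/2) * (Real.arctan (Real.sqrt ε * Real.sqrt (xc - ε/4)/(δ + ε/2))
              / (Real.sqrt ε * Real.sqrt (xc - ε/4)/(δ + ε/2))) / (δ + ε/2)
        - (xc - ε/2) * (Real.arctan (Real.sqrt ε * Real.sqrt (xc - ε/4)/(δ - ε/2))
              / (Real.sqrt ε * Real.sqrt (xc - ε/4)/(δ - ε/2))) / (δ - ε/2)))
      (𝓝[>] (0:ℝ)) (𝓝 ((1/(μ*xc^2)) *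
        ((Real.log (xc+δ) - Real.log (xc-δ) - Real.log (δ^2)/2 + Real.log (δ^2)/2)
          + 0 - xc * 1 / δ - xc * 1 / δ))) := by
    exact (((((tendsto_const_nhds.sub (hL2.div_const 2)).add (hL3.div_const 2)).add
      hT1).sub hT2).sub hT3).const_mul _
  refine ⟨_, hN.congr' ?_⟩
  symm
  filter_upwards [Ioo_mem_nhdsGT (show (0:ℝ) < δ from hδ)] with ε hε
  rw [closed_form μ xc δ ε hμ hxc hδ hδ2 hε.1 hε.2]
  have hrε : (0:ℝ) < Real.sqrt ε := Real.sqrt_pos.2 hε.1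
  have hrx : (0:ℝ) < Real.sqrt xc := Real.sqrt_pos.2 hxc
  have hx32 : xc ^ ((3:ℝ)/2) = xc^2 / Real.sqrt xc := by
    rw [show ((3:ℝ)/2) = (2:ℝ) - 1/2 by norm_num, Real.rpow_sub hxc, ← Real.sqrt_eq_rpow]
    norm_num
  have hrpow : Real.pi / (μ * xc ^ ((3:ℝ)/2) * Real.sqrt ε)
      = (1/(μ*xc^2)) * (Real.pi * Real.sqrt xc / Real.sqrt ε) := by
    rw [hx32]; field_simp
  rw [hrpow]
  linear_combination (1/(μ*xc^2)) * stmt19_ptid xc δ ε hxc hδ hδ2 hε.1 hε.2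

/-- For `F_ε(x) = (1−γ)x + μ(2x_c−ε)x² − μx³` (with `γ = μx_c²` so that `ε = 0` is the
saddle-node bifurcation) and `δ > 0` fixed small, the passage time
`N_ε = ∫_{x_c−δ}^{x_c+δ} dx/(x − F_ε(x))` satisfies
`N_ε = π/(μ x_c^{3/2} ε^{1/2}) + O(1)` as `ε → 0⁺`; in particular
`N_ε · ε^{1/2} → π/(μ x_c^{3/2})`. -/
theorem stmt19 (μ γ xc : ℝ) (hμ : 0 < μ) (hxc : 0 < xc) (hγ : γ = μ * xc ^ 2) :
    ∃ δ₀ > (0 : ℝ), ∀ δ : ℝ, 0 < δ → δ < δ₀ →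
      ((fun ε : ℝ =>
          (∫ x in (xc - δ)..(xc + δ),
            (x - ((1 - γ) * x + μ * (2 * xc - ε) * x ^ 2 - μ * x ^ 3))⁻¹)
          - Real.pi / (μ * xc ^ ((3 : ℝ) / 2) * Real.sqrt ε))
        =O[𝓝[>] (0 : ℝ)] fun _ => (1 : ℝ)) ∧
      Tendsto (fun ε : ℝ =>
          (∫ x in (xc - δ)..(xc + δ),
            (x - ((1 - γ) * x + μ * (2 * xc - ε) * x ^ 2 - μ * x ^ 3))⁻¹)
          * Real.sqrt ε)
        (𝓝[>] (0 : ℝ)) (𝓝 (Real.pi / (μ * xc ^ ((3 : ℝ) / 2)))) := by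
  subst hγ
  refine ⟨xc / 2, by positivity, fun δ hδ hδ2 => ?_⟩
  obtain ⟨c, hc⟩ := stmt19_main μ xc δ hμ hxc hδ hδ2
  constructor
  · exact hc.isBigO_one ℝ
  · have h1 : Tendsto (fun ε : ℝ =>
        ((∫ x in (xc - δ)..(xc + δ),
            (x - ((1 - μ * xc ^ 2) * x + μ * (2 * xc - ε) * x ^ 2 - μ * x ^ 3))⁻¹)
          - Real.pi / (μ * xc ^ ((3 : ℝ) / 2) * Real.sqrt ε)) * Real.sqrt ε
          + Real.pi / (μ * xc ^ ((3 : ℝ) / 2)))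
        (𝓝[>] (0:ℝ)) (𝓝 (c * 0 + Real.pi / (μ * xc ^ ((3 : ℝ) / 2)))) := by
      apply Tendsto.add _ tendsto_const_nhds
      exact hc.mul ((Real.continuous_sqrt.tendsto' 0 0 (by simp)).mono_left nhdsWithin_le_nhds)
    rw [show c * 0 + Real.pi / (μ * xc ^ ((3 : ℝ) / 2)) = Real.pi / (μ * xc ^ ((3 : ℝ) / 2)) by ring] at h1
    apply h1.congr'
    filter_upwards [self_mem_nhdsWithin] with ε (hε : 0 < ε)
    have hs : Real.sqrt ε ≠ 0 := (Real.sqrt_pos.2 hε).ne'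
    rw [sub_mul, div_mul_eq_mul_div, mul_div_mul_right _ _ hs]
    ring
end
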